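/- Let X be a minimal subshift arising from a primitive substitution, and for k ∈ ℕ let A⁺(k) be the set of one-sided sequences x⁺ ∈ X_{[0,∞)} with card(Γₖ⁻(x⁺)) > 1. If A⁺(k) is finite for every k, then for every b ∈ L_k(X) there exists an admissible word a with ba ∈ L(X) and {b} = ωₖ⁻(a); consequently X is λ-synchronizing. -/

import Mathlib

variable {A : Type*} [Fintype A] [TopologicalSpace A] [DiscreteTopology A]

/-- `w` occurs in the bi-infinite sequence `x`. -/
def occursIn (w : List A) (x : ℤ → A) : Prop :=
  ∃ i : ℤ, ∀ j : Fin w.length, x (i + (j : ℤ)) = w.get j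

/-- The language of a set of bi-infinite sequences. -/
def Lang (X : Set (ℤ → A)) (w : List A) : Prop := ∃ x ∈ X, occursIn w x

/-- The right-infinite one-sided sequences of `X`. -/
def XPlus (X : Set (ℤ → A)) : Set (ℕ → A) :=
  {y | ∃ x ∈ X, ∀ n : ℕ, x (n : ℤ) = y n}

/-- `Γₖ⁻(y)` for a right-infinite sequence `y`: length-`k` words `b` such that
`b y` is realized in `X` (with `b` at coordinates `0,…,k-1` and `y` shifted to
coordinates `k, k+1, …`). -/
def GammaInf (X : Set (ℤ → A)) (k : ℕ) (y : ℕ → A) : Set (List A) :=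
  {b | b.length = k ∧ ∃ x ∈ X, (∀ j : Fin b.length, x (j : ℤ) = b.get j) ∧
    ∀ n : ℕ, x ((k : ℤ) + (n : ℤ)) = y n}

/-- `Γₖ⁻(a)` for a finite word `a`. -/
def GammaW (X : Set (ℤ → A)) (k : ℕ) (a : List A) : Set (List A) :=
  {b | b.length = k ∧ Lang X (b ++ a)}

/-- `ωₖ⁻(a)` for a finite word `a`. -/
def OmegaW (X : Set (ℤ → A)) (k : ℕ) (a : List A) : Set (List A) :=
  {b | b.length = k ∧ ∀ c : List A, Lang X (a ++ c) → Lang X (b ++ a ++ c)}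

set_option linter.unusedSectionVars false

/-- realization of `w` in `x` at position `i` -/
def Rea (x : ℤ → A) (i : ℤ) (w : List A) : Prop :=
  ∀ j : Fin w.length, x (i + (j : ℤ)) = w.get j

lemma real_append {x : ℤ → A} {i : ℤ} {u v : List A}
    (hu : Rea x i u) (hv : Rea x (i + u.length) v) : Rea x i (u ++ v) := by
  intro j
  rcases j with ⟨j, hj⟩
  rw [List.length_append] at hj
  by_cases h : j < u.length
  · have := hu ⟨j, h⟩
    simpa [List.get_eq_getElem, List.getElem_append_left h] using this
  · have hj' : j - u.length < v.length := by omega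
    have := hv ⟨j - u.length, hj'⟩
    have harg : i + u.length + (j - u.length : ℕ) = i + (j : ℕ) := by
      push_cast [Nat.cast_sub (le_of_not_gt h)]; ring
    rw [harg] at this
    simpa [List.get_eq_getElem, List.getElem_append_right (le_of_not_gt h)] using this

lemma real_append_left {x : ℤ → A} {i : ℤ} {u v : List A}
    (h : Rea x i (u ++ v)) : Rea x i u := by
  intro j
  rcases j with ⟨j, hj⟩
  have hj2 : j < (u ++ v).length := by rw [List.length_append]; omega
  have := h ⟨j, hj2⟩
  simpa [List.get_eq_getElem, List.getElem_append_left hj] using this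

lemma real_append_right {x : ℤ → A} {i : ℤ} {u v : List A}
    (h : Rea x i (u ++ v)) : Rea x (i + u.length) v := by
  intro j
  rcases j with ⟨j, hj⟩
  have hj2 : u.length + j < (u ++ v).length := by rw [List.length_append]; omega
  have := h ⟨u.length + j, hj2⟩
  have harg : i + (u.length + j : ℕ) = i + u.length + (j : ℕ) := by push_cast; ring
  rw [harg] at this
  simpa [List.get_eq_getElem, List.getElem_append_right (Nat.le_add_right _ _)] using this

lemma real_ofFn {x : ℤ → A} {i : ℤ} {n : ℕ} :
    Rea x i (List.ofFn fun t : Fin n => x (i + (t : ℤ))) := by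
  intro j
  rw [List.get_ofFn]
  rfl

lemma occursIn_iff {w : List A} {x : ℤ → A} : occursIn w x ↔ ∃ i : ℤ, Rea x i w := Iff.rfl

lemma lang_of_real {X : Set (ℤ → A)} {x : ℤ → A} (hx : x ∈ X) {i : ℤ} {w : List A}
    (h : Rea x i w) : Lang X w := ⟨x, hx, i, h⟩

lemma shift_mem {X : Set (ℤ → A)} (hinv : ∀ x : ℤ → A, x ∈ X ↔ (fun i => x (i + 1)) ∈ X)
    {x : ℤ → A} (hx : x ∈ X) (n : ℤ) : (fun i => x (i + n)) ∈ X := by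
  induction n using Int.induction_on with
  | zero => simpa using hx
  | succ m ih =>
      have := (hinv _).1 ih
      have he : (fun i => (fun i => x (i + m)) (i + 1)) = fun i => x (i + (m + 1)) := by
        funext i; congr 1; ring
      rwa [he] at this
  | pred m ih =>
      have := (hinv (fun i => x (i + (-m - 1)))).2 (by
        have he : (fun i => (fun i => x (i + (-m - 1))) (i + 1)) = fun i => x (i + -(m:ℤ)) := by
          funext i; congr 1; ring
        rwa [he])
      convert this using 2 with i

lemma real_shift {x : ℤ → A} {i n : ℤ} {w : List A} (h : Rea x i w) :
    Rea (fun t => x (t + n)) (i - n) w := by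
  intro j
  have := h j
  simpa [show i - n + (j : ℤ) + n = i + (j : ℤ) by ring] using this

lemma lang_at_zero {X : Set (ℤ → A)} (hinv : ∀ x : ℤ → A, x ∈ X ↔ (fun i => x (i + 1)) ∈ X)
    {w : List A} (h : Lang X w) : ∃ x ∈ X, Rea x 0 w := by
  obtain ⟨x, hx, i, hr⟩ := h
  refine ⟨fun t => x (t + i), shift_mem hinv hx i, ?_⟩
  have := real_shift (n := i) hr
  simpa using this

lemma lang_prefix {X : Set (ℤ → A)} {u v : List A} (h : Lang X (u ++ v)) : Lang X u := by
  obtain ⟨x, hx, i, hr⟩ := h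
  exact ⟨x, hx, i, real_append_left hr⟩

lemma isClosed_coord (c : ℤ) (a : A) : IsClosed {z : ℤ → A | z c = a} :=
  (isClosed_singleton).preimage (continuous_apply c)

lemma isOpen_coord (c : ℤ) (a : A) : IsOpen {z : ℤ → A | z c = a} := by
  have he : {z : ℤ → A | z c = a} = (fun z : ℤ → A => z c) ⁻¹' {a} := rfl
  rw [he]
  exact (isOpen_discrete _).preimage (continuous_apply c)

/-- the word `x[m, m+n)` -/
noncomputable def seg (x : ℤ → A) (m : ℤ) (n : ℕ) : List A :=
  List.ofFn fun t : Fin n => x (m + (t : ℤ))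

lemma seg_length (x : ℤ → A) (m : ℤ) (n : ℕ) : (seg x m n).length = n := by
  simp [seg]

lemma real_seg (x : ℤ → A) (m : ℤ) (n : ℕ) : Rea x m (seg x m n) := real_ofFn

lemma seg_get (x : ℤ → A) (m : ℤ) (n : ℕ) (j : Fin (seg x m n).length) :
    (seg x m n).get j = x (m + (j : ℤ)) := (real_seg x m n j).symm

lemma seg_add (x : ℤ → A) (m : ℤ) (s u : ℕ) :
    seg x m (s + u) = seg x m s ++ seg x (m + s) u := by
  rw [seg, List.ofFn_add]
  congr 1
  rw [seg]
  congr 1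
  funext j
  congr 1
  push_cast [Fin.coe_natAdd]
  ring

lemma seg_append (x : ℤ → A) (m : ℤ) (s t : ℕ) (h : s ≤ t) :
    seg x m t = seg x m s ++ seg x (m + s) (t - s) := by
  obtain ⟨u, rfl⟩ := Nat.exists_eq_add_of_le h
  simpa using seg_add x m s u

/-- the intersection-of-compacts lemma: if `b' ++ x[m,m+t)` is in the language for
every `t`, then `b'` is a left-extension of the ray of `x` at `m`. -/
lemma ginf_of_forall_lang {X : Set (ℤ → A)} (hclosed : IsClosed X)
    (hinv : ∀ x : ℤ → A, x ∈ X ↔ (fun i => x (i + 1)) ∈ X)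
    {k : ℕ} {b' : List A} (hlen : b'.length = k) {x : ℤ → A} {m : ℤ}
    (h : ∀ t : ℕ, Lang X (b' ++ seg x m t)) :
    b' ∈ GammaInf X k (fun n => x (m + (n : ℤ))) := by
  set K : ℕ → Set (ℤ → A) := fun t =>
    X ∩ ((⋂ j : Fin b'.length, {z : ℤ → A | z (j : ℤ) = b'.get j}) ∩
      ⋂ i : Fin t, {z : ℤ → A | z ((k : ℤ) + (i : ℤ)) = x (m + (i : ℤ))}) with hK
  have hmemK : ∀ t z, z ∈ K t ↔ (z ∈ X ∧ (∀ j : Fin b'.length, z (j : ℤ) = b'.get j) ∧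
      ∀ i : Fin t, z ((k : ℤ) + (i : ℤ)) = x (m + (i : ℤ))) := by
    intro t z
    simp [hK, Set.mem_iInter, and_assoc]
  have hclosedK : ∀ t, IsClosed (K t) := by
    intro t
    refine IsClosed.inter hclosed (IsClosed.inter ?_ ?_)
    · exact isClosed_iInter fun j => isClosed_coord _ _
    · exact isClosed_iInter fun i => isClosed_coord _ _
  have hdec : ∀ t, K (t + 1) ⊆ K t := by
    intro t z hz
    rw [hmemK] at hz ⊢
    exact ⟨hz.1, hz.2.1, fun i => hz.2.2 ⟨i, by omega⟩⟩
  have hne : ∀ t, (K t).Nonempty := by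
    intro t
    obtain ⟨z, hz, hr⟩ := lang_at_zero hinv (h t)
    rw [Set.nonempty_def]
    refine ⟨z, (hmemK t z).2 ⟨hz, ?_, ?_⟩⟩
    · intro j
      have := real_append_left hr j
      simpa using this
    · intro i
      have hr2 := real_append_right hr
      have hi : (i : ℕ) < (seg x m t).length := by rw [seg_length]; exact i.2
      have := hr2 ⟨i, hi⟩
      rw [seg_get] at this
      simpa [hlen] using this
  have hcpt : IsCompact (K 0) := ((hclosedK 0).isCompact)
  obtain ⟨z, hz⟩ := IsCompact.nonempty_iInter_of_sequence_nonempty_isCompact_isClosed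
    K hdec hne hcpt hclosedK
  simp only [Set.mem_iInter] at hz
  have hz' : ∀ t, z ∈ X ∧ (∀ j : Fin b'.length, z (j : ℤ) = b'.get j) ∧
      ∀ i : Fin t, z ((k : ℤ) + (i : ℤ)) = x (m + (i : ℤ)) := fun t => (hmemK t z).1 (hz t)
  refine ⟨hlen, z, (hz' 0).1, (hz' 0).2.1, ?_⟩
  intro n
  exact (hz' (n + 1)).2.2 ⟨n, by omega⟩

/-- every word of the language occurs in every point at arbitrarily-late positions -/
lemma occ_unbounded {X : Set (ℤ → A)} (hne : X.Nonempty) (hclosed : IsClosed X)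
    (hinv : ∀ x : ℤ → A, x ∈ X ↔ (fun i => x (i + 1)) ∈ X)
    (hmin : ∀ x ∈ X, ∀ y ∈ X,
      y ∈ closure {z : ℤ → A | ∃ n : ℤ, z = fun i => x (i + n)})
    {w : List A} (hw : Lang X w) :
    ∀ x ∈ X, ∀ M : ℤ, ∃ p : ℤ, M ≤ p ∧ Rea x p w := by
  obtain ⟨x0, hx0, hr0⟩ := lang_at_zero hinv hw
  -- open cover of X
  set O : ℤ → Set (ℤ → A) := fun n => {z | Rea z n w} with hO
  have hOopen : ∀ n, IsOpen (O n) := by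
    intro n
    have : O n = ⋂ j : Fin w.length, {z : ℤ → A | z (n + (j : ℤ)) = w.get j} := by
      ext z; simp [hO, Rea, Set.mem_iInter]
    rw [this]
    exact isOpen_iInter_of_finite fun j => isOpen_coord _ _
  have hcover : X ⊆ ⋃ n : ℤ, O n := by
    intro z hz
    have hcl := hmin z hz x0 hx0
    have hU : {u : ℤ → A | Rea u 0 w} ∈ nhds x0 := (hOopen 0).mem_nhds hr0
    obtain ⟨u, hu1, hu2⟩ := mem_closure_iff_nhds.1 hcl _ hU
    obtain ⟨n, rfl⟩ := hu2
    refine Set.mem_iUnion.2 ⟨n, ?_⟩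
    intro j
    show z (n + (j:ℤ)) = w.get j
    rw [show n + (j:ℤ) = 0 + (j:ℤ) + n by ring]
    exact hu1 j
  obtain ⟨F, hF⟩ := (hclosed.isCompact).elim_finite_subcover O hOopen hcover
  have hFne : F.Nonempty := by
    by_contra hemp
    rw [Finset.not_nonempty_iff_eq_empty] at hemp
    obtain ⟨x, hx⟩ := hne
    have := hF hx
    simp [hemp] at this
  set n0 := F.min' hFne with hn0
  intro x hx M
  have hz : (fun i => x (i + (M - n0))) ∈ X := shift_mem hinv hx _
  obtain ⟨n, hnF, hn⟩ := Set.mem_iUnion₂.1 (hF hz)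
  refine ⟨n + (M - n0), by have := F.min'_le n hnF; omega, ?_⟩
  intro j
  show x (n + (M - n0) + (j:ℤ)) = w.get j
  rw [show n + (M - n0) + (j:ℤ) = n + (j:ℤ) + (M - n0) by ring]
  exact hn j

lemma iter_per {u : ℤ → A} {d : ℤ} (h : ∀ i : ℤ, u (i + d) = u i) :
    ∀ t : ℕ, ∀ i : ℤ, u (i + t * d) = u i := by
  intro t
  induction t with
  | zero => intro i; simp
  | succ s ih =>
      intro i
      have : i + (s + 1 : ℕ) * d = (i + d) + s * d := by push_cast; ring
      rw [this, ih, h]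

/-- If one point of X has an eventually periodic right tail, then every point of X
is fully periodic (X is a single finite periodic orbit). -/
lemma all_periodic {X : Set (ℤ → A)} (hclosed : IsClosed X)
    (hinv : ∀ x : ℤ → A, x ∈ X ↔ (fun i => x (i + 1)) ∈ X)
    (hmin : ∀ x ∈ X, ∀ y ∈ X,
      y ∈ closure {z : ℤ → A | ∃ n : ℤ, z = fun i => x (i + n)})
    {x1 : ℤ → A} (hx1 : x1 ∈ X) {p : ℤ} {d' : ℕ} (hd : 0 < d')
    (h1 : ∀ t : ℕ, x1 (p + (t : ℤ)) = x1 (p + ((t : ℤ) + (d' : ℤ)))) :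
    ∀ u ∈ X, ∀ i : ℤ, u (i + (d' : ℤ)) = u i := by
  -- iterate the one-sided periodicity
  have hiter : ∀ jt t : ℕ, x1 (p + (t : ℤ)) = x1 (p + ((t : ℤ) + (jt : ℤ) * (d' : ℤ))) := by
    intro jt
    induction jt with
    | zero => intro t; simp
    | succ s ih =>
        intro t
        have e : (t : ℤ) + (s + 1 : ℕ) * (d' : ℤ) = ((t + d' : ℕ) : ℤ) + (s : ℤ) * (d' : ℤ) := by
          push_cast; ring
        rw [e, ← ih (t + d')]
        rw [h1 t]
        exact congrArg x1 (by push_cast; ring)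
  have hmod : ∀ a : ℕ, x1 (p + (a : ℤ)) = x1 (p + ((a % d' : ℕ) : ℤ)) := by
    intro a
    have h2 : a = a % d' + (a / d') * d' := (Nat.mod_add_div' a d').symm
    have e : (a : ℤ) = ((a % d' : ℕ) : ℤ) + ((a / d' : ℕ) : ℤ) * (d' : ℤ) := by
      exact_mod_cast h2
    rw [e, ← hiter]
  -- the periodic limit point z
  set z : ℤ → A := fun i => x1 (p + i % (d' : ℤ)) with hz
  have hd0 : (d' : ℤ) ≠ 0 := by positivity
  have hdpos : (0 : ℤ) < (d' : ℤ) := by positivity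
  have hcoord : ∀ i : ℤ, ∀ j : ℕ, i.natAbs ≤ j →
      x1 (i + (p + (j : ℤ) * (d' : ℤ))) = z i := by
    intro i j hj
    have hnn : 0 ≤ i + (j : ℤ) * (d' : ℤ) := by
      have h1' : (j : ℤ) ≤ (j : ℤ) * (d' : ℤ) :=
        le_mul_of_one_le_right (by positivity) (by exact_mod_cast hd)
      omega
    set a : ℕ := (i + (j : ℤ) * (d' : ℤ)).toNat with ha
    have haz : (a : ℤ) = i + (j : ℤ) * (d' : ℤ) := Int.toNat_of_nonneg hnn
    have e1 : i + (p + (j : ℤ) * (d' : ℤ)) = p + (a : ℤ) := by rw [haz]; ring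
    rw [e1, hmod a]
    have e2 : ((a % d' : ℕ) : ℤ) = i % (d' : ℤ) := by
      rw [Int.natCast_mod, haz]
      push_cast
      rw [Int.add_mul_emod_self_right]
    rw [e2]
  have hzX : z ∈ X := by
    have htend : Filter.Tendsto (fun j : ℕ => (fun i => x1 (i + (p + (j : ℤ) * (d' : ℤ)))))
        Filter.atTop (nhds z) := by
      rw [tendsto_pi_nhds]
      intro i
      apply Filter.Tendsto.congr' (f₁ := fun _ => z i)
      · filter_upwards [Filter.eventually_ge_atTop i.natAbs] with j hj
        exact (hcoord i j hj).symm
      · exact tendsto_const_nhds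
    have hmem : ∀ j : ℕ, (fun i => x1 (i + (p + (j : ℤ) * (d' : ℤ)))) ∈ X := fun j =>
      shift_mem hinv hx1 _
    have := mem_closure_of_tendsto htend (Filter.Eventually.of_forall hmem)
    rwa [hclosed.closure_eq] at this
  have hzper : ∀ i : ℤ, z (i + (d' : ℤ)) = z i := by
    intro i
    show x1 (p + (i + (d' : ℤ)) % (d' : ℤ)) = x1 (p + i % (d' : ℤ))
    congr 2
    rw [show i + (d' : ℤ) = i + (d' : ℤ) * 1 by ring, Int.add_mul_emod_self_left]
  -- the finite closed orbit of z
  set Oz : Set (ℤ → A) := Set.range (fun v : Fin d' => fun i => z (i + (v : ℤ))) with hOz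
  have hOzfin : Oz.Finite := Set.finite_range _
  have hOzclosed : IsClosed Oz := hOzfin.isClosed
  have horb : ∀ n : ℤ, (fun i => z (i + n)) ∈ Oz := by
    intro n
    have hlt : (n % (d' : ℤ)).toNat < d' := by
      have h1' := Int.emod_lt_of_pos n hdpos
      have h2' := Int.emod_nonneg n hd0
      omega
    refine ⟨⟨(n % (d' : ℤ)).toNat, hlt⟩, ?_⟩
    funext i
    show z (i + ((n % (d' : ℤ)).toNat : ℤ)) = z (i + n)
    have h2' := Int.emod_nonneg n hd0
    rw [Int.toNat_of_nonneg h2']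
    show x1 (p + (i + n % (d' : ℤ)) % (d' : ℤ)) = x1 (p + (i + n) % (d' : ℤ))
    congr 2
    conv_rhs => rw [show i + n = i + n % (d' : ℤ) + (d' : ℤ) * (n / (d' : ℤ)) by
      rw [Int.add_assoc, Int.emod_add_mul_ediv]]
    rw [Int.add_mul_emod_self_left]
  -- every point of X is in the orbit of z
  intro u hu i
  have hucl := hmin z hzX u hu
  have hsub : {v : ℤ → A | ∃ n : ℤ, v = fun i => z (i + n)} ⊆ Oz := by
    rintro v ⟨n, rfl⟩
    exact horb n
  have huOz : u ∈ Oz := by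
    have := closure_mono hsub hucl
    rwa [hOzclosed.closure_eq] at this
  obtain ⟨v, rfl⟩ := huOz
  show z (i + (d' : ℤ) + (v : ℤ)) = z (i + (v : ℤ))
  rw [show i + (d' : ℤ) + (v : ℤ) = (i + (v : ℤ)) + (d' : ℤ) by ring, hzper]

/-- In a fully periodic system, every ray has at most one length-k left extension. -/
lemma gamma_subsingleton_of_periodic {X : Set (ℤ → A)} {d' : ℕ} (hd : 0 < d')
    (hper : ∀ u ∈ X, ∀ i : ℤ, u (i + (d' : ℤ)) = u i)
    (k : ℕ) (y : ℕ → A) :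
    ∀ b1 b2, b1 ∈ GammaInf X k y → b2 ∈ GammaInf X k y → b1 = b2 := by
  have key : ∀ u ∈ X, ∀ v ∈ X, (∀ n : ℕ, u ((k : ℤ) + (n : ℤ)) = y n) →
      (∀ n : ℕ, v ((k : ℤ) + (n : ℤ)) = y n) → u = v := by
    intro u hu v hv hyu hyv
    funext i
    set t : ℕ := (k - i).toNat with ht
    have htd : (k : ℤ) ≤ i + (t : ℤ) * (d' : ℤ) := by
      have h1' : (t : ℤ) ≤ (t : ℤ) * (d' : ℤ) :=
        le_mul_of_one_le_right (by positivity) (by exact_mod_cast hd)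
      have h2' : (k : ℤ) - i ≤ (t : ℤ) := by omega
      omega
    set n : ℕ := (i + (t : ℤ) * (d' : ℤ) - k).toNat with hn
    have hnz : (n : ℤ) = i + (t : ℤ) * (d' : ℤ) - (k : ℤ) := Int.toNat_of_nonneg (by omega)
    have e : i + (t : ℤ) * (d' : ℤ) = (k : ℤ) + (n : ℤ) := by omega
    calc u i = u (i + (t : ℤ) * (d' : ℤ)) := (iter_per (hper u hu) t i).symm
    _ = y n := by rw [e]; exact hyu n
    _ = v (i + (t : ℤ) * (d' : ℤ)) := by rw [e]; exact (hyv n).symm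
    _ = v i := iter_per (hper v hv) t i
  rintro b1 b2 ⟨hl1, u, hu, hb1, hy1⟩ ⟨hl2, v, hv, hb2, hy2⟩
  have huv : u = v := key u hu v hv hy1 hy2
  apply List.ext_get (by rw [hl1, hl2])
  intro j h1 h2
  rw [← hb1 ⟨j, h1⟩, ← hb2 ⟨j, h2⟩, huv]

/-- Existence of a point realizing `w` at 0 whose ray at position `r` has at most one
length-`k` left extension. -/
lemma exists_good_point {X : Set (ℤ → A)} (hne : X.Nonempty) (hclosed : IsClosed X)
    (hinv : ∀ x : ℤ → A, x ∈ X ↔ (fun i => x (i + 1)) ∈ X)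
    (hmin : ∀ x ∈ X, ∀ y ∈ X,
      y ∈ closure {z : ℤ → A | ∃ n : ℤ, z = fun i => x (i + n)})
    (hfin : ∀ k : ℕ, {y : ℕ → A | y ∈ XPlus X ∧
        ∃ b b' : List A, b ≠ b' ∧ b ∈ GammaInf X k y ∧
          b' ∈ GammaInf X k y}.Finite)
    {w : List A} (hw : Lang X w) (k : ℕ) (r : ℕ) :
    ∃ x ∈ X, Rea x 0 w ∧ ∀ b1 b2, b1 ∈ GammaInf X k (fun n => x ((r : ℤ) + (n : ℤ))) →
      b2 ∈ GammaInf X k (fun n => x ((r : ℤ) + (n : ℤ))) → b1 = b2 := by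
  obtain ⟨x1, hx1, hr1⟩ := lang_at_zero hinv hw
  have hstep : ∀ q : ℤ, ∃ p : ℤ, q ≤ p ∧ Rea x1 p w :=
    fun q => occ_unbounded hne hclosed hinv hmin hw x1 hx1 q
  -- a strictly monotone sequence of occurrences
  set g : ℕ → ℤ := fun n => Nat.rec (Classical.choose (hstep 0))
    (fun _ prev => Classical.choose (hstep (prev + 1))) n with hg
  have hgocc : ∀ n, Rea x1 (g n) w := by
    intro n
    cases n with
    | zero => exact (Classical.choose_spec (hstep 0)).2
    | succ m => exact (Classical.choose_spec (hstep (g m + 1))).2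
  have hgmono : ∀ n, g n < g (n + 1) := by
    intro n
    have := (Classical.choose_spec (hstep (g n + 1))).1
    show g n < Classical.choose (hstep (g n + 1))
    omega
  have hgstrict : StrictMono g := strictMono_nat_of_lt_succ hgmono
  -- shift to an occurrence: point realizing w at 0 with prescribed ray behaviour
  have hshift : ∀ n, (fun i => x1 (i + g n)) ∈ X ∧ Rea (fun i => x1 (i + g n)) 0 w := by
    intro n
    refine ⟨shift_mem hinv hx1 _, ?_⟩
    intro j
    show x1 (0 + (j : ℤ) + g n) = w.get j
    rw [show (0 : ℤ) + (j : ℤ) + g n = g n + (j : ℤ) by ring]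
    exact hgocc n j
  by_cases hgood : ∃ n, ∀ b1 b2,
      b1 ∈ GammaInf X k (fun t => x1 (g n + (r : ℤ) + (t : ℤ))) →
      b2 ∈ GammaInf X k (fun t => x1 (g n + (r : ℤ) + (t : ℤ))) → b1 = b2
  · obtain ⟨n, hn⟩ := hgood
    refine ⟨fun i => x1 (i + g n), (hshift n).1, (hshift n).2, ?_⟩
    have he : (fun t : ℕ => (fun i => x1 (i + g n)) ((r : ℤ) + (t : ℤ)))
        = fun t : ℕ => x1 (g n + (r : ℤ) + (t : ℤ)) := by
      funext t
      show x1 ((r : ℤ) + (t : ℤ) + g n) = _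
      congr 1
      ring
    rw [he]
    exact hn
  · -- all rays after occurrences are in the finite bad set: pigeonhole gives periodicity
    push_neg at hgood
    set S := {y : ℕ → A | y ∈ XPlus X ∧ ∃ b b' : List A, b ≠ b' ∧ b ∈ GammaInf X k y ∧
        b' ∈ GammaInf X k y} with hS
    have hmemS : ∀ n, (fun t : ℕ => x1 (g n + (r : ℤ) + (t : ℤ))) ∈ S := by
      intro n
      obtain ⟨b1, b2, hm1, hm2, hne12⟩ := hgood n
      refine ⟨⟨fun i => x1 (i + (g n + (r : ℤ))), shift_mem hinv hx1 _, ?_⟩, b1, b2, hne12, hm1, hm2⟩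
      intro t
      show x1 ((t : ℤ) + (g n + (r : ℤ))) = x1 (g n + (r : ℤ) + (t : ℤ))
      congr 1
      ring
    haveI : Finite ↥S := (hfin k).to_subtype
    obtain ⟨n, n', hnn', heq⟩ := Finite.exists_ne_map_eq_of_infinite
      (fun n : ℕ => (⟨_, hmemS n⟩ : S))
    have hrayeq : (fun t : ℕ => x1 (g n + (r : ℤ) + (t : ℤ)))
        = fun t : ℕ => x1 (g n' + (r : ℤ) + (t : ℤ)) := congrArg Subtype.val heq
    obtain ⟨m, m', hlt, hray⟩ : ∃ m m', g m < g m' ∧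
        (∀ t : ℕ, x1 (g m + (r : ℤ) + (t : ℤ)) = x1 (g m' + (r : ℤ) + (t : ℤ))) := by
      have hgne : g n ≠ g n' := fun h => hnn' (hgstrict.injective h)
      rcases hgne.lt_or_gt with h | h
      · exact ⟨n, n', h, fun t => congrFun hrayeq t⟩
      · exact ⟨n', n, h, fun t => (congrFun hrayeq t).symm⟩
    set p : ℤ := g m + (r : ℤ) with hp
    set d' : ℕ := (g m' - g m).toNat with hd'
    have hd : 0 < d' := by omega
    have hd'z : (d' : ℤ) = g m' - g m := Int.toNat_of_nonneg (by omega)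
    have h1 : ∀ t : ℕ, x1 (p + (t : ℤ)) = x1 (p + ((t : ℤ) + (d' : ℤ))) := by
      intro t
      rw [show p + ((t : ℤ) + (d' : ℤ)) = g m' + (r : ℤ) + (t : ℤ) by rw [hd'z, hp]; ring]
      rw [show p + (t : ℤ) = g m + (r : ℤ) + (t : ℤ) by rw [hp]]
      exact hray t
    have hper := all_periodic hclosed hinv hmin hx1 hd h1
    refine ⟨fun i => x1 (i + g 0), (hshift 0).1, (hshift 0).2, ?_⟩
    exact gamma_subsingleton_of_periodic hd hper k _

lemma lang_seg_prefix {X : Set (ℤ → A)} {b : List A} {x : ℤ → A} {m : ℤ} {t n : ℕ}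
    (h : t ≤ n) (hl : Lang X (b ++ seg x m n)) : Lang X (b ++ seg x m t) := by
  rw [seg_append x m t n h, ← List.append_assoc] at hl
  exact lang_prefix hl

lemma omega_mono {X : Set (ℤ → A)} {k : ℕ} {b : List A} {x : ℤ → A} {m : ℤ} {s t : ℕ}
    (hst : s ≤ t) (hb : b ∈ OmegaW X k (seg x m s)) : b ∈ OmegaW X k (seg x m t) := by
  refine ⟨hb.1, ?_⟩
  intro c hc
  rw [seg_append x m s t hst] at hc ⊢
  rw [List.append_assoc] at hc
  have := hb.2 _ hc
  simp only [List.append_assoc] at this ⊢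
  exact this

lemma bad_of_not_omega {X : Set (ℤ → A)}
    (hinv : ∀ x : ℤ → A, x ∈ X ↔ (fun i => x (i + 1)) ∈ X)
    {k : ℕ} {bstar a : List A}
    (hlen : bstar.length = k) (hnot : bstar ∉ OmegaW X k a) :
    ∃ b'' : List A, b''.length = k ∧ b'' ≠ bstar ∧ Lang X (b'' ++ a) := by
  have hno : ¬ (∀ c, Lang X (a ++ c) → Lang X (bstar ++ a ++ c)) := fun h => hnot ⟨hlen, h⟩
  push_neg at hno
  obtain ⟨c, hc, hnc⟩ := hno
  obtain ⟨z, hz, hzr⟩ := lang_at_zero hinv hc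
  set b'' := seg z (-(k : ℤ)) k with hb
  have hlen'' : b''.length = k := seg_length ..
  have hreal : Rea z (-(k : ℤ)) (b'' ++ (a ++ c)) := by
    apply real_append (real_seg z _ k)
    rw [hlen'', show -(k : ℤ) + (k : ℤ) = 0 by ring]
    exact hzr
  have hlang : Lang X (b'' ++ a ++ c) := by
    have := lang_of_real hz hreal
    rwa [← List.append_assoc] at this
  refine ⟨b'', hlen'', ?_, ?_⟩
  · rintro rfl
    exact hnc hlang
  · exact lang_prefix (u := b'' ++ a) (v := c) hlang

lemma pigeon {X : Set (ℤ → A)} {k : ℕ} {bstar : List A} {x : ℤ → A} {m : ℤ}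
    (H : ∀ s : ℕ, ∃ n : ℕ, s ≤ n ∧ ∃ b'' : List A, b''.length = k ∧ b'' ≠ bstar ∧
      Lang X (b'' ++ seg x m n)) :
    ∃ b' : List A, b'.length = k ∧ b' ≠ bstar ∧ ∀ t : ℕ, Lang X (b' ++ seg x m t) := by
  choose n hn b hblen hbne hblang using H
  haveI : Finite ↥{l : List A | l.length = k} := (List.finite_length_eq A k).to_subtype
  obtain ⟨b', hb'⟩ := Finite.exists_infinite_fiber
    (fun s : ℕ => (⟨b s, hblen s⟩ : {l : List A | l.length = k}))
  have hinf : {s : ℕ | (⟨b s, hblen s⟩ : {l : List A | l.length = k}) = b'}.Infinite := by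
    rw [← Set.infinite_coe_iff]
    exact hb'
  obtain ⟨s0, hs0⟩ := hinf.nonempty
  have hs0' : b s0 = (b' : List A) := congrArg Subtype.val hs0
  refine ⟨(b' : List A), b'.2, by rw [← hs0']; exact hbne s0, ?_⟩
  intro t
  obtain ⟨s, hsmem, hst⟩ := hinf.exists_gt t
  have hs' : b s = (b' : List A) := congrArg Subtype.val hsmem
  have : Lang X ((b' : List A) ++ seg x m (n s)) := by rw [← hs']; exact hblang s
  exact lang_seg_prefix (le_trans (le_of_lt hst) (hn s)) this

/-- Theorem 4.1: for a minimal subshift (arising from a primitive substitution)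
in which each set A⁺(k) of right-infinite rays with more than one length-k
left-extension is finite, every word b of length k satisfies {b} = ωₖ⁻(a) for
some right extension a; consequently X is λ-synchronizing. -/
theorem stmt12 (X : Set (ℤ → A)) (hne : X.Nonempty) (hclosed : IsClosed X)
    (hinv : ∀ x : ℤ → A, x ∈ X ↔ (fun i => x (i + 1)) ∈ X)
    (hmin : ∀ x ∈ X, ∀ y ∈ X,
      y ∈ closure {z : ℤ → A | ∃ n : ℤ, z = fun i => x (i + n)})
    (hfin : ∀ k : ℕ, {y : ℕ → A | y ∈ XPlus X ∧
        ∃ b b' : List A, b ≠ b' ∧ b ∈ GammaInf X k y ∧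
          b' ∈ GammaInf X k y}.Finite) :
    (∀ (k : ℕ) (b : List A), b.length = k → Lang X b →
      ∃ a : List A, Lang X (b ++ a) ∧ OmegaW X k a = {b}) ∧
    (∀ w : List A, Lang X w → ∀ k : ℕ, ∃ v : List A,
      (Lang X v ∧ ∀ b ∈ GammaW X k v, b ∈ OmegaW X k v) ∧ Lang X (w ++ v)) := by
  constructor
  · -- Part 1
    intro k b hlen hblang
    obtain ⟨x, hx, hre, hsub⟩ := exists_good_point hne hclosed hinv hmin hfin hblang k k
    have hbG : b ∈ GammaInf X k (fun n => x ((k : ℤ) + (n : ℤ))) := by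
      refine ⟨hlen, x, hx, ?_, fun n => rfl⟩
      intro j
      have hj := hre ⟨j, by omega⟩
      rw [show (0 : ℤ) + ((j : ℕ) : ℤ) = ((j : ℕ) : ℤ) by ring] at hj
      exact hj
    have claim1 : ∀ b' : List A, b'.length = k →
        (∀ t, Lang X (b' ++ seg x (k : ℤ) t)) → b' = b := fun b' hl ht =>
      hsub b' b (ginf_of_forall_lang hclosed hinv hl ht) hbG
    have claimA : ∃ N1, b ∈ OmegaW X k (seg x (k : ℤ) N1) := by
      by_contra hA
      push_neg at hA
      have H : ∀ s : ℕ, ∃ n, s ≤ n ∧ ∃ b'' : List A, b''.length = k ∧ b'' ≠ b ∧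
          Lang X (b'' ++ seg x (k : ℤ) n) :=
        fun s => ⟨s, le_refl s, bad_of_not_omega hinv hlen (hA s)⟩
      obtain ⟨b', hl', hne', hall⟩ := pigeon H
      exact hne' (claim1 b' hl' hall)
    have claimB : ∃ N2, ∀ n, N2 ≤ n → ∀ b' ∈ OmegaW X k (seg x (k : ℤ) n), b' = b := by
      by_contra hB
      push_neg at hB
      have H : ∀ s : ℕ, ∃ n, s ≤ n ∧ ∃ b'' : List A, b''.length = k ∧ b'' ≠ b ∧
          Lang X (b'' ++ seg x (k : ℤ) n) := by
        intro s
        obtain ⟨n, hns, b', hb'mem, hb'ne⟩ := hB s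
        refine ⟨n, hns, b', hb'mem.1, hb'ne, ?_⟩
        have hseg : Lang X (seg x (k : ℤ) n ++ []) := by
          rw [List.append_nil]
          exact lang_of_real hx (real_seg x (k : ℤ) n)
        have := hb'mem.2 [] hseg
        rwa [List.append_nil] at this
      obtain ⟨b', hl', hne', hall⟩ := pigeon H
      exact hne' (claim1 b' hl' hall)
    obtain ⟨N1, hN1⟩ := claimA
    obtain ⟨N2, hN2⟩ := claimB
    refine ⟨seg x (k : ℤ) (max N1 N2), ?_, ?_⟩
    · apply lang_of_real hx (i := 0)
      apply real_append hre
      rw [hlen, show (0 : ℤ) + (k : ℤ) = (k : ℤ) by ring]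
      exact real_seg x (k : ℤ) _
    · apply Set.eq_singleton_iff_unique_mem.2
      exact ⟨omega_mono (le_max_left N1 N2) hN1,
        fun b' hb' => hN2 _ (le_max_right N1 N2) b' hb'⟩
  · -- Part 2
    intro w hw k
    obtain ⟨x, hx, hrw, hsub⟩ := exists_good_point hne hclosed hinv hmin hfin hw k w.length
    set m : ℕ := w.length with hm
    set bstar : List A := seg x ((m : ℤ) - (k : ℤ)) k with hbstar
    have hbl : bstar.length = k := seg_length ..
    have hbG : bstar ∈ GammaInf X k (fun n => x ((m : ℤ) + (n : ℤ))) := by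
      refine ⟨hbl, fun i => x (i + ((m : ℤ) - (k : ℤ))), shift_mem hinv hx _, ?_, ?_⟩
      · intro j
        have h2 : bstar.get j = x (((m : ℤ) - (k : ℤ)) + ((j : ℕ) : ℤ)) :=
          seg_get x ((m : ℤ) - (k : ℤ)) k j
        rw [h2]
        show x (((j : ℕ) : ℤ) + ((m : ℤ) - (k : ℤ))) = _
        congr 1
        ring
      · intro n
        show x ((k : ℤ) + (n : ℤ) + ((m : ℤ) - (k : ℤ))) = x ((m : ℤ) + (n : ℤ))
        congr 1
        ring
    have claim1 : ∀ b' : List A, b'.length = k →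
        (∀ t, Lang X (b' ++ seg x (m : ℤ) t)) → b' = bstar := fun b' hl ht =>
      hsub b' bstar (ginf_of_forall_lang hclosed hinv hl ht) hbG
    have claimA : ∃ N1, ∀ n, N1 ≤ n → ∀ b' ∈ GammaW X k (seg x (m : ℤ) n), b' = bstar := by
      by_contra hA
      push_neg at hA
      have H : ∀ s : ℕ, ∃ n, s ≤ n ∧ ∃ b'' : List A, b''.length = k ∧ b'' ≠ bstar ∧
          Lang X (b'' ++ seg x (m : ℤ) n) := by
        intro s
        obtain ⟨n, hns, b', hmem, hne'⟩ := hA s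
        exact ⟨n, hns, b', hmem.1, hne', hmem.2⟩
      obtain ⟨b', hl', hne', hall⟩ := pigeon H
      exact hne' (claim1 b' hl' hall)
    have claimB : ∃ N2, bstar ∈ OmegaW X k (seg x (m : ℤ) N2) := by
      by_contra hB
      push_neg at hB
      have H : ∀ s : ℕ, ∃ n, s ≤ n ∧ ∃ b'' : List A, b''.length = k ∧ b'' ≠ bstar ∧
          Lang X (b'' ++ seg x (m : ℤ) n) :=
        fun s => ⟨s, le_refl s, bad_of_not_omega hinv hbl (hB s)⟩
      obtain ⟨b', hl', hne', hall⟩ := pigeon H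
      exact hne' (claim1 b' hl' hall)
    obtain ⟨N1, hN1⟩ := claimA
    obtain ⟨N2, hN2⟩ := claimB
    refine ⟨seg x (m : ℤ) (max N1 N2),
      ⟨lang_of_real hx (real_seg x (m : ℤ) _), ?_⟩, ?_⟩
    · intro b' hb'
      have hbb : b' = bstar := hN1 _ (le_max_left _ _) b' hb'
      rw [hbb]
      exact omega_mono (le_max_right N1 N2) hN2
    · apply lang_of_real hx (i := 0)
      apply real_append hrw
      rw [show ((w.length : ℕ) : ℤ) = (m : ℤ) by rw [hm]]
      rw [show (0 : ℤ) + (m : ℤ) = (m : ℤ) by ring]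
      exact real_seg x (m : ℤ) _
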